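/- Let R = k[[x_1, ..., x_n]] and let I ⊆ R be a monomial ideal. Then the m-th jet support closure I^{m-jsc} is also a monomial ideal, for every m ∈ ℕ. -/

import Mathlib

open Polynomial

/-- The truncated polynomial ring `A[t]/(t^(m+1))`. -/
abbrev JetTrunc (A : Type) [CommRing A] (m : ℕ) : Type :=
  Polynomial A ⧸ (Ideal.span {(X : Polynomial A) ^ (m + 1)} : Ideal (Polynomial A))

/-- The image of the variable `t` in `A[t]/(t^(m+1))`. -/
noncomputable def jetT (A : Type) [CommRing A] (m : ℕ) : JetTrunc A m :=
  Ideal.Quotient.mk _ (X : Polynomial A)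

/-- A test datum for the `m`-th jet closure of an ideal `I` of a local `k`-algebra `(R, 𝔪)`:
a `k`-algebra `A` together with a `k`-algebra map `φ : R → A[t]/(t^(m+1))` killing `I`
and sending the maximal ideal `𝔪` into `(t)` (i.e. an `A`-point of the scheme of local
`m`-jets of `Spec (R/I)` over the closed point). -/
structure JetTest (k : Type) [CommRing k] {R : Type} [CommRing R] [Algebra k R]
    (𝔪 : Ideal R) (m : ℕ) (I : Ideal R) where
  A : Type
  [instCommRing : CommRing A]
  [instAlgebra : Algebra k A]
  φ : R →ₐ[k] JetTrunc A m
  ker_I : ∀ f ∈ I, φ f = 0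
  max_to_t : ∀ f ∈ 𝔪, φ f ∈ Ideal.span {jetT A m}

attribute [instance] JetTest.instCommRing JetTest.instAlgebra

/-- The `m`-th jet closure `I^{m-jc}` of an ideal `I` in a local `k`-algebra `(R, 𝔪)`:
the intersection of the kernels of all jet test maps (functor-of-points description of the
kernel of `μ_m : R → R_m[t]/(t^(m+1), I_m, 𝔪^e)`). -/
noncomputable def jetClosure (k : Type) [CommRing k] {R : Type} [CommRing R] [Algebra k R]
    (𝔪 : Ideal R) (m : ℕ) (I : Ideal R) : Ideal R :=
  sInf { J : Ideal R | ∃ T : JetTest k 𝔪 m I, J = RingHom.ker T.φ }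

/-- A test datum for the `m`-th jet support closure: like a jet closure test,
but with the coefficient `k`-algebra `A` required to be reduced (functor-of-points
description of maps from `(R_m/(I_m + 𝔪^e))_red`). -/
structure JetSupportTest (k : Type) [CommRing k] {R : Type} [CommRing R] [Algebra k R]
    (𝔪 : Ideal R) (m : ℕ) (I : Ideal R) where
  A : Type
  [instCommRing : CommRing A]
  [instReduced : IsReduced A]
  [instAlgebra : Algebra k A]
  φ : R →ₐ[k] JetTrunc A m
  ker_I : ∀ f ∈ I, φ f = 0
  max_to_t : ∀ f ∈ 𝔪, φ f ∈ Ideal.span {jetT A m}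

attribute [instance] JetSupportTest.instCommRing JetSupportTest.instReduced
  JetSupportTest.instAlgebra

/-- The `m`-th jet support closure `I^{m-jsc}` of an ideal `I` in a local `k`-algebra
`(R, 𝔪)`. -/
noncomputable def jetSupportClosure (k : Type) [CommRing k] {R : Type} [CommRing R]
    [Algebra k R] (𝔪 : Ideal R) (m : ℕ) (I : Ideal R) : Ideal R :=
  sInf { J : Ideal R | ∃ T : JetSupportTest k 𝔪 m I, J = RingHom.ker T.φ }

/-- The maximal ideal `(x_1, ..., x_n)` of the formal power series ring `k[[x_1, ..., x_n]]`. -/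
noncomputable def mIdeal (k : Type) [Field k] (n : ℕ) : Ideal (MvPowerSeries (Fin n) k) :=
  RingHom.ker (MvPowerSeries.constantCoeff : MvPowerSeries (Fin n) k →+* k)

/-- An ideal of `k[[x_1, ..., x_n]]` is a monomial ideal if it is generated by a set of
monomials. -/
def IsMonomialIdeal {k : Type} [Field k] {n : ℕ} (I : Ideal (MvPowerSeries (Fin n) k)) :
    Prop :=
  ∃ S : Set (Fin n →₀ ℕ),
    I = Ideal.span ((fun d => MvPowerSeries.monomial d (1 : k)) '' S)

namespace JSCAux

open MvPowerSeries Finset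

variable {k : Type} [Field k] {n : ℕ}

/-- total degree of an exponent -/
def mdeg (d : Fin n →₀ ℕ) : ℕ := ∑ i, d i

lemma mdeg_add (a b : Fin n →₀ ℕ) : mdeg (a + b) = mdeg a + mdeg b := by
  simp [mdeg, Finset.sum_add_distrib]

lemma mdeg_single (i : Fin n) (c : ℕ) : mdeg (Finsupp.single i c) = c := by
  simp [mdeg, Finsupp.single_apply]

lemma apply_le_mdeg (d : Fin n →₀ ℕ) (i : Fin n) : d i ≤ mdeg d :=
  Finset.single_le_sum (f := fun j => d j) (fun _ _ => Nat.zero_le _) (Finset.mem_univ i)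

lemma mdeg_zero : mdeg (0 : Fin n →₀ ℕ) = 0 := by simp [mdeg]

/-- the set of monomials of total degree `K` -/
def SK (k : Type) [Field k] (n K : ℕ) : Set (MvPowerSeries (Fin n) k) :=
  {g | ∃ d : Fin n →₀ ℕ, mdeg d = K ∧ g = MvPowerSeries.monomial (R := k) d 1}

lemma coeff_apply (f : MvPowerSeries (Fin n) k) (d : Fin n →₀ ℕ) :
    MvPowerSeries.coeff (R := k) d f = f d := rfl

lemma X_mul_mem_span (K : ℕ) (i : Fin n) (g : MvPowerSeries (Fin n) k)
    (hg : g ∈ Ideal.span (SK k n K)) :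
    X (R := k) i * g ∈ Ideal.span (SK k n (K + 1)) := by
  refine Submodule.span_induction
    (p := fun g _ => X (R := k) i * g ∈ Ideal.span (SK k n (K + 1))) ?_ ?_ ?_ ?_ hg
  · rintro x ⟨d, hd, rfl⟩
    rw [X_def, MvPowerSeries.monomial_mul_monomial, one_mul]
    refine Ideal.subset_span ⟨Finsupp.single i 1 + d, ?_, rfl⟩
    rw [mdeg_add, mdeg_single, hd, add_comm]
  · show X (R := k) i * 0 ∈ _
    rw [mul_zero]; exact Ideal.zero_mem _
  · intro x y _ _ hx hy
    show X (R := k) i * (x + y) ∈ _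
    rw [mul_add]; exact Ideal.add_mem _ hx hy
  · intro a x _ hx
    show X (R := k) i * (a • x) ∈ _
    rw [mul_smul_comm]; exact Submodule.smul_mem _ _ hx

lemma mem_span_high : ∀ (K : ℕ) (f : MvPowerSeries (Fin n) k),
    (∀ e : Fin n →₀ ℕ, mdeg e < K → MvPowerSeries.coeff (R := k) e f = 0) →
    f ∈ Ideal.span (SK k n K) := by
  intro K
  induction K with
  | zero =>
    intro f _
    have h1 : (1 : MvPowerSeries (Fin n) k) ∈ SK k n 0 :=
      ⟨0, mdeg_zero, (MvPowerSeries.monomial_zero_one (R := k)).symm⟩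
    have := Ideal.mul_mem_left (Ideal.span (SK k n 0)) f (Ideal.subset_span h1)
    rwa [mul_one] at this
  | succ K IH =>
    intro f hf
    classical
    -- decompose f = ∑ i, X i * g i
    set g : Fin n → MvPowerSeries (Fin n) k := fun i e =>
      if (∀ j : Fin n, j < i → e j = 0) then
        MvPowerSeries.coeff (R := k) (e + Finsupp.single i 1) f else 0 with hgdef
    have hgcoeff : ∀ (i : Fin n) (e : Fin n →₀ ℕ), MvPowerSeries.coeff (R := k) e (g i) =
        if (∀ j : Fin n, j < i → e j = 0) then
          MvPowerSeries.coeff (R := k) (e + Finsupp.single i 1) f else 0 := fun i e => rfl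
    have hfg : f = ∑ i : Fin n, X (R := k) i * g i := by
      apply MvPowerSeries.ext
      intro e
      rw [map_sum]
      have hterm : ∀ i : Fin n, MvPowerSeries.coeff (R := k) e (X (R := k) i * g i) =
          if (1 ≤ e i ∧ ∀ j : Fin n, j < i → e j = 0) then MvPowerSeries.coeff (R := k) e f else 0 := by
        intro i
        rw [X_def, MvPowerSeries.coeff_monomial_mul, one_mul]
        by_cases h1 : Finsupp.single i 1 ≤ e
        · rw [if_pos h1, hgcoeff]
          have h1' : 1 ≤ e i := Finsupp.single_le_iff.mp h1
          have hsub : ∀ j : Fin n, j ≠ i → (e - Finsupp.single i 1 : Fin n →₀ ℕ) j = e j := by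
            intro j hj
            rw [Finsupp.tsub_apply, Finsupp.single_apply, if_neg (fun h => hj h.symm), tsub_zero]
          by_cases h2 : ∀ j : Fin n, j < i → e j = 0
          · rw [if_pos, if_pos ⟨h1', h2⟩, tsub_add_cancel_of_le h1]
            intro j hj
            rw [hsub j (ne_of_lt hj), h2 j hj]
          · rw [if_neg, if_neg]
            · rintro ⟨_, h⟩; exact h2 h
            · intro hcon
              apply h2
              intro j hj
              have := hcon j hj
              rwa [hsub j (ne_of_lt hj)] at this
        · rw [if_neg h1, if_neg]
          rintro ⟨h1', _⟩
          exact h1 (Finsupp.single_le_iff.mpr h1')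
      rw [Finset.sum_congr rfl (fun i _ => hterm i)]
      by_cases he : e = 0
      · subst he
        rw [hf 0 (by rw [mdeg_zero]; omega)]
        symm
        apply Finset.sum_eq_zero
        intro i _
        rw [if_neg]
        rintro ⟨h1, _⟩
        simp at h1
      · have hsupp : e.support.Nonempty := Finsupp.support_nonempty_iff.mpr he
        set i₀ := e.support.min' hsupp with hi₀def
        have hi₀ : e i₀ ≠ 0 := Finsupp.mem_support_iff.mp (e.support.min'_mem hsupp)
        have hlow : ∀ j : Fin n, j < i₀ → e j = 0 := by
          intro j hj
          by_contra hne
          exact absurd (e.support.min'_le j (Finsupp.mem_support_iff.mpr hne))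
            (not_le.mpr hj)
        rw [Finset.sum_eq_single i₀]
        · rw [if_pos ⟨Nat.one_le_iff_ne_zero.mpr hi₀, hlow⟩]
        · intro i _ hne
          rw [if_neg]
          rintro ⟨h1, h2⟩
          have hmem : i ∈ e.support := Finsupp.mem_support_iff.mpr (by omega)
          have : i₀ ≤ i := e.support.min'_le i hmem
          rcases lt_or_eq_of_le this with h | h
          · exact hi₀ (h2 i₀ h)
          · exact hne h.symm
        · intro h; exact absurd (Finset.mem_univ i₀) h
    rw [hfg]
    apply Ideal.sum_mem
    intro i _
    apply X_mul_mem_span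
    apply IH
    intro e he
    rw [hgcoeff]
    split_ifs with hcond
    · apply hf
      rw [mdeg_add, mdeg_single]
      omega
    · rfl


lemma monomial_mem_pow : ∀ (K : ℕ) (d : Fin n →₀ ℕ), mdeg d = K →
    MvPowerSeries.monomial (R := k) d 1 ∈ (mIdeal k n) ^ K := by
  intro K
  induction K with
  | zero => intro d _; rw [pow_zero, Ideal.one_eq_top]; exact Submodule.mem_top
  | succ K IH =>
    intro d hd
    have hex : ∃ i : Fin n, d i ≠ 0 := by
      by_contra hcon
      push_neg at hcon
      have : mdeg d = 0 := Finset.sum_eq_zero (fun i _ => hcon i)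
      omega
    obtain ⟨i, hi⟩ := hex
    have hle : Finsupp.single i 1 ≤ d := Finsupp.single_le_iff.mpr (Nat.one_le_iff_ne_zero.mpr hi)
    have heq : Finsupp.single i 1 + (d - Finsupp.single i 1) = d := add_tsub_cancel_of_le hle
    have hdeg : mdeg (d - Finsupp.single i 1) = K := by
      have := mdeg_add (Finsupp.single i 1) (d - Finsupp.single i 1)
      rw [heq, mdeg_single, hd] at this
      omega
    have hX : X (R := k) i ∈ mIdeal k n := by
      rw [mIdeal, RingHom.mem_ker]
      exact MvPowerSeries.constantCoeff_X i
    have hrest := IH (d - Finsupp.single i 1) hdeg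
    have : MvPowerSeries.monomial (R := k) d 1 = X (R := k) i *
        MvPowerSeries.monomial (R := k) (d - Finsupp.single i 1) 1 := by
      rw [X_def, MvPowerSeries.monomial_mul_monomial, one_mul, heq]
    rw [this, pow_succ']
    exact Ideal.mul_mem_mul hX hrest

lemma span_SK_le_pow (K : ℕ) : Ideal.span (SK k n K) ≤ (mIdeal k n) ^ K := by
  rw [Ideal.span_le]
  rintro x ⟨d, hd, rfl⟩
  exact monomial_mem_pow K d hd

lemma jetT_pow_eq_zero (A : Type) [CommRing A] (m : ℕ) : (jetT A m) ^ (m + 1) = 0 := by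
  rw [jetT, ← map_pow]
  exact Ideal.Quotient.eq_zero_iff_mem.mpr (Ideal.subset_span rfl)

lemma phi_kills_high_pow {A : Type} [CommRing A] [Algebra k A] {m : ℕ}
    (φ : MvPowerSeries (Fin n) k →ₐ[k] JetTrunc A m)
    (hmax : ∀ f ∈ mIdeal k n, φ f ∈ Ideal.span {jetT A m})
    (g : MvPowerSeries (Fin n) k) (hg : g ∈ (mIdeal k n) ^ (m + 1)) : φ g = 0 := by
  have h1 : Ideal.map φ ((mIdeal k n) ^ (m + 1)) ≤ ⊥ := by
    rw [Ideal.map_pow]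
    have h2 : Ideal.map φ (mIdeal k n) ≤ Ideal.span {jetT A m} :=
      Ideal.map_le_iff_le_comap.mpr (fun f hf => hmax f hf)
    calc Ideal.map φ (mIdeal k n) ^ (m + 1) ≤ (Ideal.span {jetT A m}) ^ (m + 1) :=
          Ideal.pow_right_mono h2 (m + 1)
      _ = Ideal.span {(jetT A m) ^ (m + 1)} := Ideal.span_singleton_pow _ _
      _ = Ideal.span {(0 : JetTrunc A m)} := by rw [jetT_pow_eq_zero]
      _ ≤ ⊥ := (Ideal.span_singleton_eq_bot.mpr rfl).le
  have := h1 (Ideal.mem_map_of_mem φ hg)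
  rwa [Ideal.mem_bot] at this

/-- the weight of an exponent under a rescaling vector -/
def wt (l : Fin n → k) (d : Fin n →₀ ℕ) : k := ∏ i, l i ^ d i

lemma wt_zero (l : Fin n → k) : wt l 0 = 1 := by simp [wt]

lemma wt_add (l : Fin n → k) (a b : Fin n →₀ ℕ) : wt l (a + b) = wt l a * wt l b := by
  rw [wt, wt, wt, ← Finset.prod_mul_distrib]
  exact Finset.prod_congr rfl (fun i _ => by rw [Finsupp.add_apply, pow_add])

/-- rescaling the variables by a vector `l`, as a `k`-algebra endomorphism of
`k[[x_1, ..., x_n]]` -/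
noncomputable def rescaleHom (l : Fin n → k) :
    MvPowerSeries (Fin n) k →ₐ[k] MvPowerSeries (Fin n) k where
  toFun f := fun d => wt l d * MvPowerSeries.coeff (R := k) d f
  map_one' := by
    classical
    apply MvPowerSeries.ext
    intro d
    show wt l d * MvPowerSeries.coeff (R := k) d 1 = MvPowerSeries.coeff (R := k) d 1
    rw [MvPowerSeries.coeff_one]
    split_ifs with h
    · subst h; rw [wt_zero, one_mul]
    · rw [mul_zero]
  map_mul' := by
    classical
    intro f g
    apply MvPowerSeries.ext
    intro d
    show wt l d * MvPowerSeries.coeff (R := k) d (f * g) = MvPowerSeries.coeff (R := k) d ((_ * _ : MvPowerSeries (Fin n) k))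
    rw [MvPowerSeries.coeff_mul]
    erw [MvPowerSeries.coeff_mul]
    rw [Finset.mul_sum]
    apply Finset.sum_congr rfl
    intro p hp
    have hpd : p.1 + p.2 = d := Finset.HasAntidiagonal.mem_antidiagonal.mp hp
    show wt l d * (MvPowerSeries.coeff (R := k) p.1 f * MvPowerSeries.coeff (R := k) p.2 g) =
      (wt l p.1 * MvPowerSeries.coeff (R := k) p.1 f) * (wt l p.2 * MvPowerSeries.coeff (R := k) p.2 g)
    rw [← hpd, wt_add]
    ring
  map_zero' := by
    apply MvPowerSeries.ext
    intro d
    show wt l d * MvPowerSeries.coeff (R := k) d 0 = MvPowerSeries.coeff (R := k) d 0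
    rw [map_zero, mul_zero]
  map_add' := by
    intro f g
    apply MvPowerSeries.ext
    intro d
    show wt l d * MvPowerSeries.coeff (R := k) d (f + g) = _
    rw [map_add, mul_add]
    rfl
  commutes' := by
    classical
    intro c
    apply MvPowerSeries.ext
    intro d
    show wt l d * MvPowerSeries.coeff (R := k) d (MvPowerSeries.C (σ := Fin n) c) =
      MvPowerSeries.coeff (R := k) d (MvPowerSeries.C (σ := Fin n) c)
    rw [MvPowerSeries.coeff_C]
    split_ifs with h
    · subst h; rw [wt_zero, one_mul]
    · rw [mul_zero]

lemma coeff_rescaleHom (l : Fin n → k) (f : MvPowerSeries (Fin n) k) (d : Fin n →₀ ℕ) :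
    MvPowerSeries.coeff (R := k) d (rescaleHom l f) = wt l d * MvPowerSeries.coeff (R := k) d f := rfl

lemma rescaleHom_monomial (l : Fin n → k) (d : Fin n →₀ ℕ) :
    rescaleHom l (MvPowerSeries.monomial (R := k) d 1) = wt l d • MvPowerSeries.monomial (R := k) d 1 := by
  classical
  apply MvPowerSeries.ext
  intro e
  rw [coeff_rescaleHom, MvPowerSeries.coeff_smul, MvPowerSeries.coeff_monomial]
  split_ifs with h
  · subst h; rfl
  · rw [mul_zero, mul_zero]

lemma rescaleHom_mem_monomial_ideal {I : Ideal (MvPowerSeries (Fin n) k)}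
    (hI : IsMonomialIdeal I) (l : Fin n → k) {f : MvPowerSeries (Fin n) k} (hf : f ∈ I) :
    rescaleHom l f ∈ I := by
  obtain ⟨S, rfl⟩ := hI
  have hmem : rescaleHom l f ∈ Ideal.map (rescaleHom l)
      (Ideal.span ((fun d => MvPowerSeries.monomial d (1 : k)) '' S)) :=
    Ideal.mem_map_of_mem _ hf
  rw [Ideal.map_span] at hmem
  refine Ideal.span_le.mpr ?_ hmem
  rintro _ ⟨_, ⟨d, hd, rfl⟩, rfl⟩
  rw [rescaleHom_monomial, Algebra.smul_def]
  exact Ideal.mul_mem_left _ _ (Ideal.subset_span ⟨d, hd, rfl⟩)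

lemma rescaleHom_mem_mIdeal (l : Fin n → k) {f : MvPowerSeries (Fin n) k}
    (hf : f ∈ mIdeal k n) : rescaleHom l f ∈ mIdeal k n := by
  rw [mIdeal, RingHom.mem_ker] at hf ⊢
  rw [← MvPowerSeries.coeff_zero_eq_constantCoeff_apply, coeff_rescaleHom, wt_zero, one_mul,
    MvPowerSeries.coeff_zero_eq_constantCoeff_apply, hf]

/-- the twist of a jet support test by a rescaling of the variables -/
noncomputable def twist {I : Ideal (MvPowerSeries (Fin n) k)} {m : ℕ}
    (T : JetSupportTest k (mIdeal k n) m I) (hI : IsMonomialIdeal I) (l : Fin n → k) :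
    JetSupportTest k (mIdeal k n) m I where
  A := T.A
  φ := T.φ.comp (rescaleHom l)
  ker_I := fun f hf => by
    simp only [AlgHom.comp_apply]
    exact T.ker_I _ (rescaleHom_mem_monomial_ideal hI l hf)
  max_to_t := fun f hf => by
    simp only [AlgHom.comp_apply]
    exact T.max_to_t _ (rescaleHom_mem_mIdeal l hf)


lemma base_lt (m : ℕ) : ∀ (n : ℕ) (d : Fin n → ℕ), (∀ i, d i ≤ m) →
    (∑ i, d i * (m + 1) ^ (i : ℕ)) < (m + 1) ^ n := by
  intro n
  induction n with
  | zero => intro d _; simp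
  | succ n IH =>
    intro d hd
    rw [Fin.sum_univ_succ]
    have hfac : ∑ i : Fin n, d i.succ * (m + 1) ^ ((i.succ : Fin (n + 1)) : ℕ) =
        (m + 1) * ∑ i : Fin n, d i.succ * (m + 1) ^ (i : ℕ) := by
      rw [Finset.mul_sum]
      apply Finset.sum_congr rfl
      intro i _
      rw [Fin.val_succ, pow_succ]
      ring
    rw [hfac]
    have hIH := IH (fun i => d i.succ) (fun i => hd i.succ)
    have h0 := hd 0
    have : ((0 : Fin (n + 1)) : ℕ) = 0 := rfl
    rw [this, pow_zero, mul_one, pow_succ]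
    nlinarith

lemma base_inj (m : ℕ) : ∀ (n : ℕ) (d d' : Fin n → ℕ), (∀ i, d i ≤ m) → (∀ i, d' i ≤ m) →
    (∑ i, d i * (m + 1) ^ (i : ℕ)) = (∑ i, d' i * (m + 1) ^ (i : ℕ)) → ∀ i, d i = d' i := by
  intro n
  induction n with
  | zero => intro _ _ _ _ _ i; exact i.elim0
  | succ n IH =>
    intro d d' hd hd' heq
    rw [Fin.sum_univ_succ, Fin.sum_univ_succ] at heq
    have hz : ((0 : Fin (n + 1)) : ℕ) = 0 := rfl
    have hfac : ∀ e : Fin (n + 1) → ℕ, ∑ i : Fin n, e i.succ * (m + 1) ^ ((i.succ : Fin (n + 1)) : ℕ) =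
        (m + 1) * ∑ i : Fin n, e i.succ * (m + 1) ^ (i : ℕ) := by
      intro e
      rw [Finset.mul_sum]
      apply Finset.sum_congr rfl
      intro i _
      rw [Fin.val_succ, pow_succ]
      ring
    rw [hz, pow_zero, mul_one, hfac d, hfac d'] at heq
    set S := ∑ i : Fin n, d i.succ * (m + 1) ^ (i : ℕ) with hS
    set S' := ∑ i : Fin n, d' i.succ * (m + 1) ^ (i : ℕ) with hS'
    have h0 : d 0 = d' 0 := by
      have hm1 : d 0 % (m + 1) = d' 0 % (m + 1) := by
        have := congrArg (· % (m + 1)) heq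
        simpa [Nat.add_mul_mod_self_left] using this
      have := hd 0
      have := hd' 0
      rwa [Nat.mod_eq_of_lt (by omega), Nat.mod_eq_of_lt (by omega)] at hm1
    have hSS : S = S' := by
      have : (m + 1) * S = (m + 1) * S' := by omega
      exact Nat.eq_of_mul_eq_mul_left (by omega) this
    have htail := IH (fun i => d i.succ) (fun i => d' i.succ)
      (fun i => hd i.succ) (fun i => hd' i.succ) hSS
    intro i
    induction i using Fin.cases with
    | zero => exact h0
    | succ j => exact htail j

lemma vdm_range [CharZero k] {V : Type} [AddCommGroup V] [Module k V] (N : ℕ) (v : ℕ → V)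
    (h : ∀ s : k, ∑ j ∈ Finset.range N, s ^ j • v j = 0) : ∀ j < N, v j = 0 := by
  classical
  have : CharZero k := by infer_instance
  set c : Fin N → k := fun i => ((i : ℕ) : k) with hc
  have hcinj : Function.Injective c := by
    intro a b hab
    exact Fin.ext (Nat.cast_injective hab)
  set W := Matrix.vandermonde c with hW
  have hdet : IsUnit W.det :=
    isUnit_iff_ne_zero.mpr (Matrix.det_vandermonde_ne_zero_iff.mpr hcinj)
  have hrow : ∀ i : Fin N, ∑ j : Fin N, W i j • v (j : ℕ) = 0 := by
    intro i
    have := h (c i)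
    rw [← Fin.sum_univ_eq_sum_range (fun j => (c i) ^ j • v j) N] at this
    simpa [hW, Matrix.vandermonde_apply] using this
  intro j hj
  set jf : Fin N := ⟨j, hj⟩ with hjf
  have h1 : v j = ∑ i : Fin N, (1 : Matrix (Fin N) (Fin N) k) jf i • v (i : ℕ) := by
    rw [Finset.sum_congr rfl (fun i _ => by rw [Matrix.one_apply, ite_smul, one_smul, zero_smul])]
    rw [Finset.sum_ite_eq Finset.univ jf (fun i => v (i : ℕ))]
    simp
    rfl
  rw [h1, ← Matrix.nonsing_inv_mul W hdet]
  have h2 : ∀ i : Fin N, (W⁻¹ * W) jf i • v (i : ℕ) =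
      ∑ l : Fin N, W⁻¹ jf l • (W l i • v (i : ℕ)) := by
    intro i
    rw [Matrix.mul_apply, Finset.sum_smul]
    exact Finset.sum_congr rfl (fun l _ => by rw [mul_smul])
  rw [Finset.sum_congr rfl (fun i _ => h2 i), Finset.sum_comm]
  rw [Finset.sum_congr rfl (fun l _ => by rw [← Finset.smul_sum, hrow l, smul_zero])]
  exact Finset.sum_const_zero

lemma multivdm {V : Type} [AddCommGroup V] [Module k V] [CharZero k] (m : ℕ)
    (D : Finset (Fin n →₀ ℕ)) (hD : ∀ d ∈ D, ∀ i, d i ≤ m)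
    (v : (Fin n →₀ ℕ) → V) (h : ∀ l : Fin n → k, ∑ d ∈ D, wt l d • v d = 0) :
    ∀ d ∈ D, v d = 0 := by
  classical
  set enc : (Fin n →₀ ℕ) → ℕ := fun d => ∑ i, d i * (m + 1) ^ (i : ℕ) with henc
  have hlt : ∀ d ∈ D, enc d < (m + 1) ^ n := fun d hd => base_lt m n (fun i => d i) (hD d hd)
  set N := (m + 1) ^ n with hN
  set w : ℕ → V := fun j => ∑ d ∈ D.filter (fun d => enc d = j), v d with hw
  have hkey : ∀ s : k, ∑ j ∈ Finset.range N, s ^ j • w j = 0 := by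
    intro s
    have step1 : ∀ j ∈ Finset.range N, s ^ j • w j =
        ∑ d ∈ D.filter (fun d => enc d = j), s ^ (enc d) • v d := by
      intro j _
      rw [hw, Finset.smul_sum]
      apply Finset.sum_congr rfl
      intro d hd
      rw [(Finset.mem_filter.mp hd).2]
    rw [Finset.sum_congr rfl step1]
    rw [Finset.sum_fiberwise_of_maps_to (fun d hd => Finset.mem_range.mpr (hlt d hd))
      (fun d => s ^ (enc d) • v d)]
    have := h (fun i => s ^ ((m + 1) ^ (i : ℕ)))
    rw [← this]
    apply Finset.sum_congr rfl
    intro d _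
    congr 1
    rw [wt, henc, ← Finset.prod_pow_eq_pow_sum]
    exact Finset.prod_congr rfl (fun i _ => by rw [← pow_mul, mul_comm])
  have hwzero := vdm_range N w hkey
  intro d hd
  have hfilter : D.filter (fun d' => enc d' = enc d) = {d} := by
    apply Finset.eq_singleton_iff_unique_mem.mpr
    constructor
    · exact Finset.mem_filter.mpr ⟨hd, rfl⟩
    · intro d' hd'
      obtain ⟨hd'D, hd'e⟩ := Finset.mem_filter.mp hd'
      have := base_inj m n (fun i => d' i) (fun i => d i) (hD d' hd'D) (hD d hd) hd'e
      ext i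
      exact this i
  have h2 := hwzero (enc d) (hlt d hd)
  simp only [hw, hfilter, Finset.sum_singleton] at h2
  exact h2


/-- the exponent all of whose coordinates are `m` -/
noncomputable def mbound (n m : ℕ) : Fin n →₀ ℕ := Finsupp.equivFunOnFinite.symm (fun _ => m)

lemma mbound_apply (m : ℕ) (i : Fin n) : mbound n m i = m := rfl

lemma mem_Iic_mbound {m : ℕ} {e : Fin n →₀ ℕ} (he : mdeg e ≤ m) :
    e ∈ Finset.Iic (mbound n m) := by
  rw [Finset.mem_Iic, Finsupp.le_def]
  intro i
  rw [mbound_apply]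
  exact le_trans (apply_le_mdeg e i) he

lemma coords_le_of_mem_Iic {m : ℕ} {e : Fin n →₀ ℕ} (he : e ∈ Finset.Iic (mbound n m)) :
    ∀ i, e i ≤ m := by
  rw [Finset.mem_Iic, Finsupp.le_def] at he
  intro i
  exact he i

lemma tail_mem (m : ℕ) (f : MvPowerSeries (Fin n) k) :
    f - ∑ e ∈ Finset.Iic (mbound n m), MvPowerSeries.coeff (R := k) e f • MvPowerSeries.monomial (R := k) e 1
      ∈ Ideal.span (SK k n (m + 1)) := by
  classical
  apply mem_span_high
  intro e he
  rw [map_sub, map_sum]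
  have hterm : ∀ d ∈ Finset.Iic (mbound n m),
      MvPowerSeries.coeff (R := k) e (MvPowerSeries.coeff (R := k) d f • MvPowerSeries.monomial (R := k) d 1) =
      if e = d then MvPowerSeries.coeff (R := k) d f else 0 := by
    intro d _
    rw [MvPowerSeries.coeff_smul, MvPowerSeries.coeff_monomial, mul_ite, mul_one, mul_zero]
  rw [Finset.sum_congr rfl hterm, Finset.sum_ite_eq,
    if_pos (mem_Iic_mbound (by omega : mdeg e ≤ m)), sub_self]

lemma key [CharZero k] {I : Ideal (MvPowerSeries (Fin n) k)} (hI : IsMonomialIdeal I) {m : ℕ}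
    (T : JetSupportTest k (mIdeal k n) m I) (f : MvPowerSeries (Fin n) k)
    (hf : f ∈ jetSupportClosure k (mIdeal k n) m I) (d : Fin n →₀ ℕ)
    (hd : d ∈ Finset.Iic (mbound n m)) (hc : MvPowerSeries.coeff (R := k) d f ≠ 0) :
    T.φ (MvPowerSeries.monomial (R := k) d 1) = 0 := by
  classical
  set D := Finset.Iic (mbound n m) with hD
  set v : (Fin n →₀ ℕ) → JetTrunc T.A m :=
    fun e => MvPowerSeries.coeff (R := k) e f • T.φ (MvPowerSeries.monomial (R := k) e 1) with hv
  have hstep : ∀ l : Fin n → k, ∑ e ∈ D, wt l e • v e = 0 := by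
    intro l
    have hσ : T.φ (rescaleHom l f) = 0 := by
      have hmem : f ∈ RingHom.ker (twist T hI l).φ :=
        Ideal.mem_sInf.mp hf ⟨twist T hI l, rfl⟩
      have := RingHom.mem_ker.mp hmem
      exact this
    have htail : T.φ (rescaleHom l f - ∑ e ∈ D,
        MvPowerSeries.coeff (R := k) e (rescaleHom l f) • MvPowerSeries.monomial (R := k) e 1) = 0 :=
      phi_kills_high_pow T.φ T.max_to_t _ (span_SK_le_pow (m + 1) (tail_mem m (rescaleHom l f)))
    have hsum : T.φ (∑ e ∈ D,
        MvPowerSeries.coeff (R := k) e (rescaleHom l f) • MvPowerSeries.monomial (R := k) e 1) = 0 := by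
      rw [map_sub, hσ, zero_sub, neg_eq_zero] at htail
      exact htail
    rw [map_sum] at hsum
    rw [← hsum]
    apply Finset.sum_congr rfl
    intro e _
    rw [map_smul, coeff_rescaleHom, mul_smul, hv]
  have hall := multivdm m D (fun e he => coords_le_of_mem_Iic he) v hstep
  have hvd : v d = 0 := hall d hd
  have : T.φ (MvPowerSeries.monomial (R := k) d 1) =
      (MvPowerSeries.coeff (R := k) d f)⁻¹ • v d := by
    rw [hv, inv_smul_smul₀ hc]
  rw [this, hvd, smul_zero]

end JSCAux
/-- if `I ⊆ k[[x_1, ..., x_n]]` is a monomial ideal, then so is its `m`-th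
jet support closure `I^{m-jsc}`, for every `m`. -/
theorem isMonomialIdeal_jetSupportClosure (k : Type) [Field k] [IsAlgClosed k] [CharZero k]
    (n : ℕ) (I : Ideal (MvPowerSeries (Fin n) k)) (hI : IsMonomialIdeal I) (m : ℕ) :
    IsMonomialIdeal (jetSupportClosure k (mIdeal k n) m I) := by
  classical
  open JSCAux in
  set J := jetSupportClosure k (mIdeal k n) m I with hJ
  refine ⟨{e | MvPowerSeries.monomial (R := k) e 1 ∈ J}, le_antisymm ?_ ?_⟩
  · -- J ≤ span of its monomials
    intro f hf
    set D := Finset.Iic (JSCAux.mbound n m) with hD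
    have hhigh : ∀ e : Fin n →₀ ℕ, JSCAux.mdeg e = m + 1 →
        MvPowerSeries.monomial (R := k) e 1 ∈ J := by
      intro e he
      apply Ideal.mem_sInf.mpr
      rintro _ ⟨T, rfl⟩
      rw [RingHom.mem_ker]
      exact JSCAux.phi_kills_high_pow T.φ T.max_to_t _ (JSCAux.monomial_mem_pow (m + 1) e he)
    have hlow : ∀ e ∈ D, MvPowerSeries.coeff (R := k) e f ≠ 0 →
        MvPowerSeries.monomial (R := k) e 1 ∈ J := by
      intro e heD hc
      apply Ideal.mem_sInf.mpr
      rintro _ ⟨T, rfl⟩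
      rw [RingHom.mem_ker]
      exact JSCAux.key hI T f hf e heD hc
    have hdecomp : f = (∑ e ∈ D, MvPowerSeries.coeff (R := k) e f • MvPowerSeries.monomial (R := k) e 1) +
        (f - ∑ e ∈ D, MvPowerSeries.coeff (R := k) e f • MvPowerSeries.monomial (R := k) e 1) := by ring
    rw [hdecomp]
    apply Ideal.add_mem
    · apply Ideal.sum_mem
      intro e heD
      by_cases hc : MvPowerSeries.coeff (R := k) e f = 0
      · rw [hc, zero_smul]; exact Ideal.zero_mem _
      · rw [Algebra.smul_def]
        exact Ideal.mul_mem_left _ _ (Ideal.subset_span ⟨e, hlow e heD hc, rfl⟩)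
    · refine Ideal.span_le.mpr ?_ (JSCAux.tail_mem m f)
      rintro _ ⟨e, he, rfl⟩
      exact Ideal.subset_span ⟨e, hhigh e he, rfl⟩
  · rw [Ideal.span_le]
    rintro _ ⟨e, he, rfl⟩
    exact he
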